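/- arXiv:2605.06385 — 2 statements merged into one kernel-verified Lean document; each statement's English description precedes it below -/
import Mathlib

section
/- Soundness of rule R2 in possibly cyclic graphs: let G=(V,E) be a directed graph, possibly cyclic, whose node set is partitioned as V = O ∪ L into observed and latent nodes, with distinct observed nodes X,Y ∈ O satisfying the pre-treatment assumption (De(Y)=∅ and Ch(X) ⊆ {Y}). Suppose that either (1) there exists Z ⊆ MB_σ^G(Y)\{X} such that X is σ-separated from Y given Z in G, or (2) there exist W ∈ MB_σ^G(X)\{Y} and Z ⊆ MB_σ^G(Y)\{X,W} such that W is not σ-separated from X given Z in G and W is σ-separated from Y given Z in G. Then the edge X→Y does not belong to E. -/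
/-- A directed graph (loopless, possibly cyclic). -/
structure DiGraph (V : Type) where
  Edge : V → V → Prop
  loopless : ∀ v, ¬ Edge v v

namespace DiGraph

variable {V : Type}

/-- Reachability by a directed path (possibly of length zero). -/
def reach (G : DiGraph V) : V → V → Prop := Relation.ReflTransGen G.Edge

/-- Ancestors of a set: nodes admitting a directed path (possibly of length zero)
to some node of the set. -/
def anc (G : DiGraph V) (S : Set V) : Set V := {Z | ∃ s ∈ S, G.reach Z s}

/-- The strongly connected component of a node. -/
def scc (G : DiGraph V) (X : V) : Set V := {Z | G.reach X Z ∧ G.reach Z X}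

/-- Descendants: nodes `Z ≠ X` with a directed path from `X` to `Z`. -/
def de (G : DiGraph V) (X : V) : Set V := {Z | Z ≠ X ∧ Relation.TransGen G.Edge X Z}

/-- Children of a node. -/
def ch (G : DiGraph V) (X : V) : Set V := {Z | G.Edge X Z}

/-- A directed graph is acyclic (a DAG) if it has no directed cycles. -/
def Acyclic (G : DiGraph V) : Prop := ∀ v, ¬ Relation.TransGen G.Edge v v

end DiGraph

/-- A path between `X` and `Y` in `G`: a sequence of `k+2` distinct nodes,
where consecutive nodes are joined by an edge of `G` in one of the two
orientations (recorded by `dir`: `dir i = true` means the edge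
`node i → node (i+1)` is used, `dir i = false` means `node (i+1) → node i`). -/
structure GPath {V : Type} (G : DiGraph V) (X Y : V) where
  k : ℕ
  node : Fin (k + 2) → V
  dir : Fin (k + 1) → Bool
  inj : Function.Injective node
  first : node 0 = X
  last : node (Fin.last (k + 1)) = Y
  adj : ∀ i : Fin (k + 1),
    (dir i = true → G.Edge (node i.castSucc) (node i.succ)) ∧
    (dir i = false → G.Edge (node i.succ) (node i.castSucc))

namespace GPath

variable {V : Type} {G : DiGraph V} {X Y : V}

/-- The `j`-th interior (non-endpoint) node of the path (position `j+1`). -/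
def inner (p : GPath G X Y) (j : Fin p.k) : V := p.node j.succ.castSucc

/-- The interior node at position `j+1` is a collider: both incident edges
of the path point into it. -/
def isCollider (p : GPath G X Y) (j : Fin p.k) : Prop :=
  p.dir j.castSucc = true ∧ p.dir j.succ = false

/-- The path is σ-blocked by `S`. -/
def sigmaBlocked (p : GPath G X Y) (S : Set V) : Prop :=
  ∃ j : Fin p.k,
    (p.isCollider j ∧ p.inner j ∉ G.anc S) ∨
    (¬ p.isCollider j ∧ p.inner j ∈ S ∧
      ((p.dir j.succ = true ∧ p.node j.succ.succ ∉ G.scc (p.inner j)) ∨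
       (p.dir j.castSucc = false ∧ p.node j.castSucc.castSucc ∉ G.scc (p.inner j))))

/-- The path is d-blocked by `S`. -/
def dBlocked (p : GPath G X Y) (S : Set V) : Prop :=
  ∃ j : Fin p.k,
    (p.isCollider j ∧ p.inner j ∉ G.anc S) ∨
    (¬ p.isCollider j ∧ p.inner j ∈ S)

end GPath

namespace DiGraph

variable {V : Type}

/-- `X` and `Y` are σ-separated given `S`: every path between them is σ-blocked. -/
def sigmaSep (G : DiGraph V) (X Y : V) (S : Set V) : Prop :=
  ∀ p : GPath G X Y, p.sigmaBlocked S

/-- `X` and `Y` are d-separated given `S`: every path between them is d-blocked. -/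
def dSep (G : DiGraph V) (X Y : V) (S : Set V) : Prop :=
  ∀ p : GPath G X Y, p.dBlocked S

end DiGraph

/-- `Ga` is a σ-acyclification of `G`. -/
def IsAcyclification {V : Type} (G Ga : DiGraph V) : Prop :=
  Ga.Acyclic ∧
  (∀ X Y : V, X ≠ Y → X ∉ G.scc Y → (Ga.Edge X Y ↔ ∃ W ∈ G.scc Y, G.Edge X W)) ∧
  (∀ X Y : V, X ≠ Y → X ∈ G.scc Y → Xor' (Ga.Edge X Y) (Ga.Edge Y X))

namespace DiGraph

variable {V : Type}

/-- `S` is the observed Markov blanket of `X` (w.r.t. σ-separation) given the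
observed node set `Obs`: the minimal set `S ⊆ Obs \ {X}` such that `X` is
σ-separated from every node of `Obs \ (S ∪ {X})` given `S`. -/
def IsSigmaMB (G : DiGraph V) (Obs : Set V) (X : V) (S : Set V) : Prop :=
  S ⊆ Obs \ {X} ∧
  (∀ W ∈ Obs \ (S ∪ {X}), G.sigmaSep X W S) ∧
  (∀ T ⊆ Obs \ {X}, (∀ W ∈ Obs \ (T ∪ {X}), G.sigmaSep X W T) → S ⊆ T)

/-- `S` is the observed Markov blanket of `X` (w.r.t. d-separation). -/
def IsDMB (G : DiGraph V) (Obs : Set V) (X : V) (S : Set V) : Prop :=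
  S ⊆ Obs \ {X} ∧
  (∀ W ∈ Obs \ (S ∪ {X}), G.dSep X W S) ∧
  (∀ T ⊆ Obs \ {X}, (∀ W ∈ Obs \ (T ∪ {X}), G.dSep X W T) → S ⊆ T)

/-- `Z` is a backdoor adjustment set for `(X, Y)`: `Z` avoids `X`, `Y` and the
descendants of `X`, and σ-blocks every backdoor path from `X` to `Y`
(a path whose first edge has an arrowhead into `X`). -/
def IsBackdoorAdjustment (G : DiGraph V) (X Y : V) (Z : Set V) : Prop :=
  X ∉ Z ∧ Y ∉ Z ∧ Z ∩ G.de X = ∅ ∧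
  ∀ p : GPath G X Y, p.dir 0 = false → p.sigmaBlocked Z

end DiGraph

/-- Pre-treatment assumption: the outcome `Y` has no descendants and the
treatment `X` has no children except possibly `Y`. -/
def PreTreatment {V : Type} (G : DiGraph V) (X Y : V) : Prop :=
  G.de Y = ∅ ∧ G.ch X ⊆ {Y}

namespace GPath

variable {V : Type} {G : DiGraph V} {W X Y : V}

/-- The single-edge path `X → Y`. -/
def single (G : DiGraph V) {X Y : V} (e : G.Edge X Y) (h : X ≠ Y) : GPath G X Y where
  k := 0
  node := ![X, Y]
  dir := fun _ => true
  inj := by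
    intro i j hij
    fin_cases i <;> fin_cases j <;> simp_all
  first := rfl
  last := rfl
  adj := by
    intro i
    refine ⟨fun _ => ?_, fun hf => by simp at hf⟩
    fin_cases i
    simpa using e

/-- Extend a path `W … X` by an edge `X → Y` (with `Y` not on the path). -/
def extend (p : GPath G W X) (e : G.Edge X Y) (hY : ∀ i, p.node i ≠ Y) :
    GPath G W Y where
  k := p.k + 1
  node := fun i => if h : (i : ℕ) < p.k + 2 then p.node ⟨i, h⟩ else Y
  dir := fun i => if h : (i : ℕ) < p.k + 1 then p.dir ⟨i, h⟩ else true
  inj := by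
    intro i j hij
    dsimp only at hij
    by_cases hi : (i : ℕ) < p.k + 2 <;> by_cases hj : (j : ℕ) < p.k + 2
    · rw [dif_pos hi, dif_pos hj] at hij
      have := p.inj hij
      exact Fin.ext (by simpa [Fin.ext_iff] using this)
    · rw [dif_pos hi, dif_neg hj] at hij; exact absurd hij (hY _)
    · rw [dif_neg hi, dif_pos hj] at hij; exact absurd hij.symm (hY _)
    · have hi2 := i.isLt; have hj2 := j.isLt
      exact Fin.ext (by omega)
  first := by
    have h0 : ((0 : Fin (p.k + 1 + 2)) : ℕ) < p.k + 2 := by simp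
    rw [dif_pos h0]
    have h1 : (⟨((0 : Fin (p.k + 1 + 2)) : ℕ), h0⟩ : Fin (p.k + 2)) = 0 :=
      Fin.ext (by simp)
    rw [h1, p.first]
  last := by
    rw [dif_neg (by simp)]
  adj := by
    intro i
    by_cases hi : (i : ℕ) < p.k + 1
    · have hc : ((i.castSucc : Fin (p.k + 1 + 2)) : ℕ) < p.k + 2 := by
        simp only [Fin.coe_castSucc, Fin.val_succ]; omega
      have hs : ((i.succ : Fin (p.k + 1 + 2)) : ℕ) < p.k + 2 := by
        simp only [Fin.coe_castSucc, Fin.val_succ]; omega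
      rw [dif_pos hi, dif_pos hc, dif_pos hs]
      have h1 : (⟨((i.castSucc : Fin (p.k + 1 + 2)) : ℕ), hc⟩ : Fin (p.k + 2)) =
          (⟨(i : ℕ), hi⟩ : Fin (p.k + 1)).castSucc := Fin.ext (by simp)
      have h2 : (⟨((i.succ : Fin (p.k + 1 + 2)) : ℕ), hs⟩ : Fin (p.k + 2)) =
          (⟨(i : ℕ), hi⟩ : Fin (p.k + 1)).succ := Fin.ext (by simp)
      rw [h1, h2]
      exact p.adj _
    · have hiv : (i : ℕ) = p.k + 1 := by have := i.isLt; omega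
      have hc : ((i.castSucc : Fin (p.k + 1 + 2)) : ℕ) < p.k + 2 := by
        simp [hiv]
      rw [dif_neg hi, dif_pos hc, dif_neg (by simp [hiv])]
      refine ⟨fun _ => ?_, fun hf => by simp at hf⟩
      have h1 : (⟨((i.castSucc : Fin (p.k + 1 + 2)) : ℕ), hc⟩ : Fin (p.k + 2)) =
          Fin.last (p.k + 1) := Fin.ext (by simp [hiv])
      rw [h1, p.last]
      exact e

/-- Truncate a path `W … X` at interior position `m + 1`. -/
def trunc (p : GPath G W X) (m : ℕ) (hm : m < p.k) :
    GPath G W (p.node ⟨m + 1, by omega⟩) where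
  k := m
  node := fun i => p.node ⟨i, by have := i.isLt; omega⟩
  dir := fun i => p.dir ⟨i, by have := i.isLt; omega⟩
  inj := by
    intro i j hij
    have := p.inj hij
    exact Fin.ext (by simpa [Fin.ext_iff] using this)
  first := by
    have h1 : (⟨((0 : Fin (m + 2)) : ℕ), by omega⟩ : Fin (p.k + 2)) = 0 :=
      Fin.ext (by simp)
    rw [h1, p.first]
  last := by
    congr 1
  adj := by
    intro i
    have h1 : (⟨((i.castSucc : Fin (m + 2)) : ℕ), by have := i.isLt; omega⟩ : Fin (p.k + 2)) =
        (⟨(i : ℕ), by have := i.isLt; omega⟩ : Fin (p.k + 1)).castSucc := Fin.ext (by simp)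
    have h2 : (⟨((i.succ : Fin (m + 2)) : ℕ), by have := i.isLt; omega⟩ : Fin (p.k + 2)) =
        (⟨(i : ℕ), by have := i.isLt; omega⟩ : Fin (p.k + 1)).succ := Fin.ext (by simp)
    rw [h1, h2]
    exact p.adj _

end GPath
namespace GPath

variable {V : Type} {G : DiGraph V} {W X Y : V}

lemma extend_blocked {p : GPath G W X} {e : G.Edge X Y} {hYp : ∀ i, p.node i ≠ Y}
    {Z : Set V} (hXZ : X ∉ Z) (hb : (p.extend e hYp).sigmaBlocked Z) :
    p.sigmaBlocked Z := by
  obtain ⟨j, hj⟩ := hb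
  by_cases hjk : (j : ℕ) < p.k
  · refine ⟨⟨(j : ℕ), hjk⟩, ?_⟩
    have h_inner : (p.extend e hYp).inner j = p.inner ⟨(j : ℕ), hjk⟩ := by
      dsimp only [GPath.inner, GPath.extend]
      rw [dif_pos (by simp only [Fin.coe_castSucc, Fin.val_succ]; omega)]
      exact congrArg _ (Fin.ext rfl)
    have h_dc : (p.extend e hYp).dir j.castSucc =
        p.dir (⟨(j : ℕ), hjk⟩ : Fin p.k).castSucc := by
      dsimp only [GPath.extend]
      rw [dif_pos (by change (j : ℕ) < p.k + 1; omega)]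
      exact congrArg _ (Fin.ext rfl)
    have h_ds : (p.extend e hYp).dir j.succ =
        p.dir (⟨(j : ℕ), hjk⟩ : Fin p.k).succ := by
      dsimp only [GPath.extend]
      rw [dif_pos (by change (j : ℕ) + 1 < p.k + 1; omega)]
      exact congrArg _ (Fin.ext rfl)
    have h_ns : (p.extend e hYp).node j.succ.succ =
        p.node (⟨(j : ℕ), hjk⟩ : Fin p.k).succ.succ := by
      dsimp only [GPath.extend]
      rw [dif_pos (by change (j : ℕ) + 1 + 1 < p.k + 2; omega)]
      exact congrArg _ (Fin.ext rfl)
    have h_nc : (p.extend e hYp).node j.castSucc.castSucc =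
        p.node (⟨(j : ℕ), hjk⟩ : Fin p.k).castSucc.castSucc := by
      dsimp only [GPath.extend]
      rw [dif_pos (by simp only [Fin.coe_castSucc]; omega)]
      exact congrArg _ (Fin.ext rfl)
    simp only [GPath.isCollider] at hj ⊢
    rw [h_inner, h_dc, h_ds, h_ns, h_nc] at hj
    exact hj
  · exfalso
    have hjv : (j : ℕ) = p.k := by have : (j : ℕ) < p.k + 1 := j.isLt; omega
    have h_inner : (p.extend e hYp).inner j = X := by
      dsimp only [GPath.inner, GPath.extend]
      rw [dif_pos (by simp only [Fin.coe_castSucc, Fin.val_succ]; omega)]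
      exact (congrArg p.node (Fin.ext (by change (j : ℕ) + 1 = p.k + 1; omega))).trans p.last
    have h_ds : (p.extend e hYp).dir j.succ = true := by
      dsimp only [GPath.extend]
      rw [dif_neg (by change ¬ ((j : ℕ) + 1 < p.k + 1); omega)]
    rcases hj with ⟨⟨-, hcol⟩, -⟩ | ⟨-, hmem, -⟩
    · rw [h_ds] at hcol; exact Bool.noConfusion hcol
    · rw [h_inner] at hmem; exact hXZ hmem

lemma trunc_blocked {p : GPath G W X} {m : ℕ} {hm : m < p.k}
    {Z : Set V} (hb : (p.trunc m hm).sigmaBlocked Z) :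
    p.sigmaBlocked Z := by
  obtain ⟨j, hj⟩ := hb
  have hjk : (j : ℕ) < p.k := by have : (j : ℕ) < m := j.isLt; omega
  refine ⟨⟨(j : ℕ), hjk⟩, ?_⟩
  have h_inner : (p.trunc m hm).inner j = p.inner ⟨(j : ℕ), hjk⟩ := by
    dsimp only [GPath.inner, GPath.trunc]
    exact congrArg _ (Fin.ext rfl)
  have h_dc : (p.trunc m hm).dir j.castSucc =
      p.dir (⟨(j : ℕ), hjk⟩ : Fin p.k).castSucc := by
    dsimp only [GPath.trunc]
    exact congrArg _ (Fin.ext rfl)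
  have h_ds : (p.trunc m hm).dir j.succ =
      p.dir (⟨(j : ℕ), hjk⟩ : Fin p.k).succ := by
    dsimp only [GPath.trunc]
    exact congrArg _ (Fin.ext rfl)
  have h_ns : (p.trunc m hm).node j.succ.succ =
      p.node (⟨(j : ℕ), hjk⟩ : Fin p.k).succ.succ := by
    dsimp only [GPath.trunc]
    exact congrArg _ (Fin.ext rfl)
  have h_nc : (p.trunc m hm).node j.castSucc.castSucc =
      p.node (⟨(j : ℕ), hjk⟩ : Fin p.k).castSucc.castSucc := by
    dsimp only [GPath.trunc]
    exact congrArg _ (Fin.ext rfl)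
  simp only [GPath.isCollider] at hj ⊢
  rw [h_inner, h_dc, h_ds, h_ns, h_nc] at hj
  exact hj

end GPath
/-- Soundness of rule R2 in possibly cyclic graphs. -/
theorem R2_sound {V : Type} [Fintype V]
    (G : DiGraph V) (Obs Lat : Set V)
    (hpart : Obs ∪ Lat = Set.univ) (hdisj : Obs ∩ Lat = ∅)
    (X Y : V) (hX : X ∈ Obs) (hY : Y ∈ Obs) (hXY : X ≠ Y)
    (hpre : PreTreatment G X Y)
    (MBX MBY : Set V)
    (hMBX : G.IsSigmaMB Obs X MBX) (hMBY : G.IsSigmaMB Obs Y MBY)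
    (hR2 : (∃ Z ⊆ MBY \ {X}, G.sigmaSep X Y Z) ∨
      (∃ W ∈ MBX \ {Y}, ∃ Z ⊆ MBY \ {X, W},
        ¬ G.sigmaSep W X Z ∧ G.sigmaSep W Y Z)) :
    ¬ G.Edge X Y := by
  intro e
  rcases hR2 with ⟨Z, hZ, hsep⟩ | ⟨W, hW, Z, hZ, hnsep, hsep⟩
  · obtain ⟨j, -⟩ := hsep (GPath.single G e hXY)
    exact j.elim0
  · rw [DiGraph.sigmaSep] at hnsep
    push_neg at hnsep
    obtain ⟨p, hp⟩ := hnsep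
    have hWY : W ≠ Y := by
      intro h; exact hW.2 (by simp [h])
    have hXZ : X ∉ Z := by
      intro hx
      have := (hZ hx).2
      simp at this
    by_cases hyon : ∃ i, p.node i = Y
    · obtain ⟨i, hi⟩ := hyon
      have hi0 : (i : ℕ) ≠ 0 := by
        intro h0
        apply hWY
        rw [show i = 0 from Fin.ext h0, p.first] at hi
        exact hi
      have hil : (i : ℕ) ≠ p.k + 1 := by
        intro hl
        apply hXY
        rw [show i = Fin.last (p.k + 1) from Fin.ext (by simpa using hl), p.last] at hi
        exact hi
      have hm : (i : ℕ) - 1 < p.k := by have := i.isLt; omega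
      have hiy : p.node ⟨(i : ℕ) - 1 + 1, by omega⟩ = Y := by
        rw [show (⟨(i : ℕ) - 1 + 1, by omega⟩ : Fin (p.k + 2)) = i from
          Fin.ext (by simp; omega)]
        exact hi
      have hq := hsep
      rw [← hiy] at hq
      exact hp (GPath.trunc_blocked (hq (p.trunc ((i : ℕ) - 1) hm)))
    · push_neg at hyon
      exact hp (GPath.extend_blocked hXZ (hsep (p.extend e hyon)))
end

section
/- Determination of the observed Markov blanket by observed separation relations: let G=(V,E) be a directed graph, possibly cyclic, whose node set is partitioned as V = O ∪ L into observed and latent nodes, and let X ∈ O. Then for any σ-acyclification G^acy of G, the collection of sets S ⊆ O\{X} such that X is σ-separated from O\(S∪{X}) given S in G coincides with the collection of sets S ⊆ O\{X} such that X is d-separated from O\(S∪{X}) given S in G^acy; consequently, any procedure that identifies the minimal such set from these separation relations returns MB_σ^G(X) when applied to G, even when G contains directed cycles. -/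
namespace MBProof

open DiGraph

variable {V : Type}

/-! ### Basic lemmas about scc / anc -/

lemma scc_self (G : DiGraph V) (x : V) : x ∈ G.scc x :=
  ⟨Relation.ReflTransGen.refl, Relation.ReflTransGen.refl⟩

lemma scc_symm {G : DiGraph V} {x y : V} (h : y ∈ G.scc x) : x ∈ G.scc y :=
  ⟨h.2, h.1⟩

lemma scc_eq_of_mem {G : DiGraph V} {x y : V} (h : y ∈ G.scc x) : G.scc x = G.scc y := by
  ext z
  constructor
  · rintro ⟨h1, h2⟩; exact ⟨h.2.trans h1, h2.trans h.1⟩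
  · rintro ⟨h1, h2⟩; exact ⟨h.1.trans h1, h2.trans h.2⟩

lemma mem_anc_of_mem {G : DiGraph V} {S : Set V} {x : V} (h : x ∈ S) : x ∈ G.anc S :=
  ⟨x, h, Relation.ReflTransGen.refl⟩

lemma anc_of_reach {G : DiGraph V} {S : Set V} {x y : V} (h : G.reach x y)
    (hy : y ∈ G.anc S) : x ∈ G.anc S := by
  obtain ⟨s, hs, hr⟩ := hy
  exact ⟨s, hs, h.trans hr⟩

lemma anc_of_edge {G : DiGraph V} {S : Set V} {x y : V} (h : G.Edge x y)
    (hy : y ∈ G.anc S) : x ∈ G.anc S :=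
  anc_of_reach (Relation.ReflTransGen.single h) hy

/-- In an acyclic graph, sccs are trivial. -/
lemma scc_acyclic {G : DiGraph V} (hG : G.Acyclic) {x y : V} (h : y ∈ G.scc x) : y = x := by
  by_contra hne
  rcases h with ⟨h1, h2⟩
  rcases (Relation.reflTransGen_iff_eq_or_transGen.mp h1) with h | h
  · exact hne h
  · rcases (Relation.reflTransGen_iff_eq_or_transGen.mp h2) with h' | h'
    · exact hne h'.symm
    · exact hG x (h.trans h')

/-! ### Walks -/

/-- Walks in a digraph: sequences of edges traversed in either direction
(`d = true`: forward, `d = false`: backward), repetitions allowed. -/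
inductive Walk (G : DiGraph V) : V → V → Type where
  | nil {x : V} : Walk G x x
  | cons {x y z : V} (d : Bool) (hT : d = true → G.Edge x y)
      (hF : d = false → G.Edge y x) (w : Walk G y z) : Walk G x z

namespace Walk

variable {G : DiGraph V}

def len : ∀ {x y : V}, Walk G x y → ℕ
  | _, _, .nil => 0
  | _, _, .cons _ _ _ w => w.len + 1

def support : ∀ {x y : V}, Walk G x y → List V
  | x, _, .nil => [x]
  | x, _, .cons _ _ _ w => x :: w.support

def append : ∀ {x y z : V}, Walk G x y → Walk G y z → Walk G x z
  | _, _, _, .nil, w2 => w2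
  | _, _, _, .cons d hT hF w, w2 => .cons d hT hF (w.append w2)

@[simp] lemma nil_append {x z : V} (w2 : Walk G x z) : (Walk.nil).append w2 = w2 := rfl

@[simp] lemma cons_append {x y u z : V} (d : Bool) (hT) (hF) (w : Walk G y u)
    (w2 : Walk G u z) : (Walk.cons (x := x) d hT hF w).append w2
      = Walk.cons d hT hF (w.append w2) := rfl

@[simp] lemma len_append : ∀ {x y z : V} (w1 : Walk G x y) (w2 : Walk G y z),
    (w1.append w2).len = w1.len + w2.len
  | _, _, _, .nil, w2 => by simp [append, len]
  | _, _, _, .cons d hT hF w, w2 => by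
      simp [append, len, len_append w w2]; omega

/-- The first step of a walk: its direction and the second node. -/
def headDat : ∀ {x y : V}, Walk G x y → Option (Bool × V)
  | _, _, .nil => none
  | _, _, .cons (y := b) d _ _ _ => some (d, b)

/-- `lastInc inc w` is the "incoming-edge context" at the end of `w`,
assuming context `inc` at its start. -/
def lastInc : ∀ {x y : V}, Option (Bool × V) → Walk G x y → Option (Bool × V)
  | _, _, inc, .nil => inc
  | x, _, _, .cons d _ _ w => lastInc (some (d, x)) w

lemma lastInc_some : ∀ {x y : V} (w : Walk G x y) (q : Bool × V),
    ∃ q', lastInc (some q) w = some q'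
  | _, _, .nil, q => ⟨q, rfl⟩
  | x, _, .cons d hT hF w, _ => lastInc_some w (d, x)

end Walk

end MBProof
namespace MBProof

open DiGraph

variable {V : Type}

/-- The σ-openness condition for an interior node `x` of a walk, with previous
node `u` (edge direction `d`, `true` = `u → x`) and next node `y`
(edge direction `d'`, `true` = `x → y`). -/
def Ok (G : DiGraph V) (S : Set V) (d : Bool) (u x : V) (d' : Bool) (y : V) : Prop :=
  if d = true ∧ d' = false then x ∈ G.anc S
  else x ∉ S ∨ ((d' = true → y ∈ G.scc x) ∧ (d = false → u ∈ G.scc x))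

namespace Walk

variable {G : DiGraph V}

/-- A walk is σ-open given `S`, with incoming context `inc` at its start. -/
def openFrom (S : Set V) : ∀ {x y : V}, Option (Bool × V) → Walk G x y → Prop
  | _, _, _, .nil => True
  | x, _, inc, .cons (y := b) d _ _ w =>
      (∀ q : Bool × V, inc = some q → Ok G S q.1 q.2 x d b) ∧ openFrom S (some (d, x)) w

@[simp] lemma openFrom_nil {S : Set V} {x : V} {inc} :
    openFrom S inc (Walk.nil (G := G) (x := x)) := trivial

lemma openFrom_cons_iff {S : Set V} {x b y : V} {inc} {d hT hF} {w : Walk G b y} :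
    openFrom S inc (Walk.cons (x := x) d hT hF w) ↔
      ((∀ q : Bool × V, inc = some q → Ok G S q.1 q.2 x d b) ∧ openFrom S (some (d, x)) w) :=
  Iff.rfl

/-- Openness depends on the incoming context only through the head condition. -/
lemma openFrom_iff (S : Set V) : ∀ {x y : V} (inc) (w : Walk G x y),
    openFrom S inc w ↔
      ((∀ (q : Bool × V) (r : Bool × V), inc = some q → w.headDat = some r →
          Ok G S q.1 q.2 x r.1 r.2) ∧ openFrom S none w)
  | _, _, inc, .nil => by simp [openFrom, headDat]
  | x, y, inc, .cons d hT hF w => by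
      simp only [openFrom, headDat]
      constructor
      · rintro ⟨h1, h2⟩
        exact ⟨fun q r hq hr => by cases hq; cases hr; exact h1 _ rfl, by simp, h2⟩
      · rintro ⟨h1, h2, h3⟩
        exact ⟨fun q hq => h1 q (d, _) hq rfl, h3⟩

lemma openFrom_append (S : Set V) : ∀ {x y z : V} (inc) (w1 : Walk G x y) (w2 : Walk G y z),
    openFrom S inc (w1.append w2) ↔ openFrom S inc w1 ∧ openFrom S (lastInc inc w1) w2
  | _, _, _, inc, .nil, w2 => by simp [lastInc]
  | _, _, _, inc, .cons d hT hF w, w2 => by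
      simp only [cons_append, openFrom, lastInc, openFrom_append S _ w w2]
      tauto

/-- Chase lemma: if a walk starts with incoming arrow (context `(true, u)`) and its
final edge points backwards, then its start is an ancestor of `S`
(follow the initial directed stretch to its first collider). -/
lemma chase (S : Set V) : ∀ {x y u : V} (w : Walk G x y),
    openFrom S (some (true, u)) w →
    (∀ p : Bool × V, lastInc (some (true, u)) w = some p → p.1 = false) →
    x ∈ G.anc S
  | x, _, u, .nil => by
      intro _ hl
      simp [lastInc] at hl
  | x, y, u, .cons (y := b) d hT hF w => by
      intro ho hl
      rcases ho with ⟨h1, h2⟩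
      cases d with
      | false =>
          have := h1 (true, u) rfl
          simpa [Ok] using this
      | true =>
          have hb : b ∈ G.anc S := by
            apply chase S w h2
            intro p hp
            exact hl p hp
          exact anc_of_edge (hT rfl) hb

end Walk

end MBProof
namespace MBProof

open DiGraph

variable {V : Type}

namespace Walk

variable {G : DiGraph V} {S : Set V}

/-- Cutting out a loop `w2` from an open walk preserves openness. -/
lemma open_cut {x v y : V} (w1 : Walk G x v) (w2 : Walk G v v) (w3 : Walk G v y)
    (h : openFrom S none (w1.append (w2.append w3))) (hw2 : 0 < w2.len) :
    openFrom S none (w1.append w3) := by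
  rw [openFrom_append] at h
  obtain ⟨o1, o23⟩ := h
  rw [openFrom_append] at o23
  obtain ⟨o2, o3⟩ := o23
  rw [openFrom_append]
  refine ⟨o1, ?_⟩
  set L1 := lastInc (G := G) none w1 with hL1
  rw [openFrom_iff]
  refine ⟨?_, ((openFrom_iff S _ w3).mp o3).2⟩
  intro q r hq hr
  -- w2 is a nonempty walk
  cases w2 with
  | nil => simp [len] at hw2
  | cons f hTf hFf w2' =>
    rename_i n1
    -- head condition of w2
    have head2 : Ok G S q.1 q.2 v f n1 := by
      rw [hq] at o2
      exact o2.1 q rfl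
    -- last context of w2
    obtain ⟨p2, hp2⟩ := lastInc_some (Walk.cons f hTf hFf w2') q
    rw [hq] at o3
    have hp2' : lastInc (some q) (Walk.cons f hTf hFf w2') = some p2 := hp2
    rw [hp2'] at o3
    have head3 : Ok G S p2.1 p2.2 v r.1 r.2 :=
      ((openFrom_iff S _ w3).mp o3).1 p2 r rfl hr
    -- now prove the junction triple
    by_cases hcol : q.1 = true ∧ r.1 = false
    · -- collider at the junction: show v ∈ anc S
      have hv : v ∈ G.anc S := by
        by_cases hg : p2.1 = true
        · -- collider on the right occurrence
          have : Ok G S true p2.2 v false r.2 := by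
            rw [← hg, ← hcol.2]; exact head3
          simpa [Ok] using this
        · have hg' : p2.1 = false := by simpa using hg
          cases f with
          | false =>
            have : Ok G S true q.2 v false n1 := by rw [← hcol.1]; exact head2
            simpa [Ok] using this
          | true =>
            -- chase through w2
            have hq1 : q = (true, q.2) := by
              rw [← hcol.1]
            have o2' : openFrom S (some (true, q.2)) (Walk.cons true hTf hFf w2') := by
              rw [hq, hq1] at o2; exact o2
            refine chase S _ o2' ?_
            intro p hp
            have : p = p2 := by
              rw [← hq1, hp2'] at hp
              exact (Option.some_injective _ hp).symm
            rw [this]; exact hg'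
      simp [Ok, hcol, hv]
    · -- non-collider at the junction
      rw [Ok, if_neg hcol]
      by_cases hvS : v ∈ S
      · right
        constructor
        · intro hr1
          have : Ok G S p2.1 p2.2 v true r.2 := by rw [← hr1]; exact head3
          rw [Ok] at this
          have hnc : ¬ (p2.1 = true ∧ (true : Bool) = false) := by simp
          rw [if_neg hnc] at this
          rcases this with h' | h'
          · exact absurd hvS h'
          · exact h'.1 rfl
        · intro hq1
          have : Ok G S false q.2 v f n1 := by rw [← hq1]; exact head2
          rw [Ok] at this
          have hnc : ¬ ((false : Bool) = true ∧ f = false) := by simp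
          rw [if_neg hnc] at this
          rcases this with h' | h'
          · exact absurd hvS h'
          · exact h'.2 rfl
      · left; exact hvS

lemma split_at_mem : ∀ {x y : V} (w : Walk G x y) (v : V), v ∈ w.support →
    ∃ (w1 : Walk G x v) (w2 : Walk G v y), w = w1.append w2
  | x, _, .nil, v, hv => by
      simp [support] at hv
      subst hv
      exact ⟨.nil, .nil, rfl⟩
  | x, y, .cons d hT hF w, v, hv => by
      simp only [support, List.mem_cons] at hv
      rcases hv with hv | hv
      · subst hv
        exact ⟨.nil, .cons d hT hF w, rfl⟩
      · obtain ⟨w1, w2, hw⟩ := split_at_mem w v hv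
        exact ⟨.cons d hT hF w1, w2, by rw [cons_append, ← hw]⟩

lemma exists_cut_of_not_nodup : ∀ {x y : V} (w : Walk G x y), ¬ w.support.Nodup →
    ∃ (v : V) (w1 : Walk G x v) (w2 : Walk G v v) (w3 : Walk G v y),
      w = w1.append (w2.append w3) ∧ 0 < w2.len
  | x, _, .nil, h => by simp [support] at h
  | x, y, .cons d hT hF w, h => by
      by_cases hx : x ∈ w.support
      · obtain ⟨wa, wb, hw⟩ := split_at_mem w x hx
        refine ⟨x, .nil, .cons d hT hF wa, wb, ?_, by simp [len]⟩
        rw [nil_append, cons_append, ← hw]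
      · have : ¬ w.support.Nodup := by
          simp only [support, List.nodup_cons] at h
          tauto
        obtain ⟨v, w1, w2, w3, hw, hlen⟩ := exists_cut_of_not_nodup w this
        exact ⟨v, .cons d hT hF w1, w2, w3, by rw [cons_append, ← hw], hlen⟩

lemma exists_nodup_open (S : Set V) : ∀ (n : ℕ) {x y : V} (w : Walk G x y),
    w.len ≤ n → openFrom S none w →
    ∃ w' : Walk G x y, openFrom S none w' ∧ w'.support.Nodup := by
  intro n
  induction n with
  | zero =>
      intro x y w hn ho
      cases w with
      | nil => exact ⟨.nil, ho, by simp [support]⟩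
      | cons d hT hF w => simp [len] at hn
  | succ n ih =>
      intro x y w hn ho
      by_cases hnod : w.support.Nodup
      · exact ⟨w, ho, hnod⟩
      · obtain ⟨v, w1, w2, w3, hw, hlen⟩ := exists_cut_of_not_nodup w hnod
        have ho' : openFrom S none (w1.append w3) := by
          apply open_cut w1 w2 w3 _ hlen
          rw [← hw]; exact ho
        apply ih (w1.append w3) _ ho'
        have : w.len = w1.len + (w2.len + w3.len) := by rw [hw]; simp
        simp only [len_append]
        omega

end Walk

end MBProof
namespace MBProof

open DiGraph

variable {V : Type}

namespace Walk

variable {G : DiGraph V} {S : Set V}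

def nodeAt : ∀ {x y : V}, Walk G x y → ℕ → V
  | x, _, .nil, _ => x
  | x, _, .cons _ _ _ _, 0 => x
  | _, _, .cons _ _ _ w, (i+1) => nodeAt w i

def dirAt : ∀ {x y : V}, Walk G x y → ℕ → Bool
  | _, _, .nil, _ => false
  | _, _, .cons d _ _ _, 0 => d
  | _, _, .cons _ _ _ w, (i+1) => dirAt w i

@[simp] lemma nodeAt_zero : ∀ {x y : V} (w : Walk G x y), w.nodeAt 0 = x
  | _, _, .nil => rfl
  | _, _, .cons _ _ _ _ => rfl

lemma nodeAt_len : ∀ {x y : V} (w : Walk G x y), w.nodeAt w.len = y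
  | _, _, .nil => rfl
  | _, _, .cons _ _ _ w => nodeAt_len w

lemma support_length : ∀ {x y : V} (w : Walk G x y), w.support.length = w.len + 1
  | _, _, .nil => rfl
  | _, _, .cons _ _ _ w => by simp [support, len, support_length w]

lemma support_getElem : ∀ {x y : V} (w : Walk G x y) (i : ℕ) (h : i < w.support.length),
    w.support[i]'h = w.nodeAt i
  | _, _, .nil, 0, _ => rfl
  | _, _, .nil, (i+1), h => by simp [support] at h
  | _, _, .cons _ _ _ w, 0, _ => rfl
  | _, _, .cons _ _ _ w, (i+1), h => by
      simp only [support, List.getElem_cons_succ]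
      exact support_getElem w i (by simpa [support] using h)

lemma nodeAt_inj {x y : V} {w : Walk G x y} (hnod : w.support.Nodup) {i j : ℕ}
    (hi : i ≤ w.len) (hj : j ≤ w.len) (h : w.nodeAt i = w.nodeAt j) : i = j := by
  have hi' : i < w.support.length := by rw [support_length]; omega
  have hj' : j < w.support.length := by rw [support_length]; omega
  rw [← support_getElem w i hi', ← support_getElem w j hj'] at h
  exact (List.Nodup.getElem_inj_iff hnod).mp h

lemma edgeAt : ∀ {x y : V} (w : Walk G x y) (i : ℕ), i < w.len →
    (w.dirAt i = true → G.Edge (w.nodeAt i) (w.nodeAt (i+1))) ∧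
    (w.dirAt i = false → G.Edge (w.nodeAt (i+1)) (w.nodeAt i))
  | _, _, .nil, i, h => by simp [len] at h
  | _, _, .cons d hT hF w, 0, h => by
      refine ⟨fun hd => ?_, fun hd => ?_⟩
      · simpa [nodeAt, dirAt] using hT hd
      · simpa [nodeAt, dirAt] using hF hd
  | _, _, .cons d hT hF w, (i+1), h => by
      simpa [nodeAt, dirAt] using edgeAt w i (by simpa [len] using h)

lemma openFrom_triples : ∀ {x y : V} (w : Walk G x y) (inc), openFrom S inc w →
    ∀ i : ℕ, i + 1 < w.len →
      Ok G S (w.dirAt i) (w.nodeAt i) (w.nodeAt (i+1)) (w.dirAt (i+1)) (w.nodeAt (i+2))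
  | _, _, .nil, inc, h, i, hi => by simp [len] at hi
  | x, _, .cons d hT hF w, inc, h, 0, hi => by
      cases w with
      | nil => simp [len] at hi
      | cons d2 hT2 hF2 w2 =>
          simpa [nodeAt, dirAt] using h.2.1 (d, x) rfl
  | _, _, .cons d hT hF w, inc, h, (i+1), hi => by
      simpa [nodeAt, dirAt] using openFrom_triples w _ h.2 i (by simpa [len] using hi)

lemma openFrom_of_triples : ∀ {x y : V} (w : Walk G x y) (inc),
    (∀ (q r : Bool × V), inc = some q → w.headDat = some r → Ok G S q.1 q.2 x r.1 r.2) →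
    (∀ i : ℕ, i + 1 < w.len →
      Ok G S (w.dirAt i) (w.nodeAt i) (w.nodeAt (i+1)) (w.dirAt (i+1)) (w.nodeAt (i+2))) →
    openFrom S inc w
  | _, _, .nil, inc, hhead, htrip => trivial
  | x, _, .cons d hT hF w, inc, hhead, htrip => by
      refine ⟨fun q hq => hhead q (d, _) hq rfl, ?_⟩
      apply openFrom_of_triples w (some (d, x))
      · intro q r hq hr
        cases hq
        cases w with
        | nil => simp [headDat] at hr
        | cons d2 hT2 hF2 w2 =>
            cases hr
            simpa [nodeAt, dirAt] using htrip 0 (by simp [len])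
      · intro i hi
        simpa [nodeAt, dirAt] using htrip (i+1) (by simpa [len] using hi)

end Walk

/-- Unblocked paths, stated via `Ok`. -/
lemma not_sigmaBlocked_iff {G : DiGraph V} {X Y : V} (p : GPath G X Y) (S : Set V) :
    ¬ p.sigmaBlocked S ↔ ∀ j : Fin p.k,
      Ok G S (p.dir j.castSucc) (p.node j.castSucc.castSucc) (p.node j.succ.castSucc)
        (p.dir j.succ) (p.node j.succ.succ) := by
  rw [GPath.sigmaBlocked, not_exists]
  refine forall_congr' (fun j => ?_)
  have hinner : p.inner j = p.node j.succ.castSucc := rfl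
  rw [hinner, GPath.isCollider, Ok]
  by_cases hc : p.dir j.castSucc = true ∧ p.dir j.succ = false
  · rw [if_pos hc]
    simp only [hc]
    tauto
  · rw [if_neg hc]
    constructor
    · intro h
      by_cases hS : p.node j.succ.castSucc ∈ S
      · right
        constructor
        · intro hd
          by_contra hmem
          exact h (Or.inr ⟨hc, hS, Or.inl ⟨hd, hmem⟩⟩)
        · intro hd
          by_contra hmem
          exact h (Or.inr ⟨hc, hS, Or.inr ⟨hd, hmem⟩⟩)
      · left; exact hS
    · intro h
      rintro (⟨hc', _⟩ | ⟨_, hS, hbad⟩)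
      · exact hc hc'
      · rcases h with h | h
        · exact h hS
        · rcases hbad with ⟨hd, hmem⟩ | ⟨hd, hmem⟩
          · exact hmem (h.1 hd)
          · exact hmem (h.2 hd)

end MBProof
namespace MBProof

open DiGraph Walk

variable {V : Type}

def Walk.castW {G : DiGraph V} {a a' b b' : V} (ha : a = a') (hb : b = b')
    (w : Walk G a b) : Walk G a' b' := ha ▸ hb ▸ w

lemma Walk.openFrom_castW {G : DiGraph V} {S : Set V} {a a' b b' : V} {inc}
    (ha : a = a') (hb : b = b') (w : Walk G a b) (h : openFrom S inc w) :
    openFrom S inc (Walk.castW ha hb w) := by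
  subst ha; subst hb; exact h

lemma exists_open_path_of_walk {G : DiGraph V} {S : Set V} {X Y : V} (hne : X ≠ Y)
    (w : Walk G X Y) (ho : openFrom S none w) (hnod : w.support.Nodup) :
    ∃ p : GPath G X Y, ¬ p.sigmaBlocked S := by
  obtain ⟨k, hk⟩ : ∃ k, w.len = k + 1 := by
    cases w with
    | nil => exact absurd rfl hne
    | cons d hT hF w' => exact ⟨w'.len, rfl⟩
  refine ⟨⟨k, fun i => w.nodeAt i.val, fun i => w.dirAt i.val, ?_, ?_, ?_, ?_⟩, ?_⟩
  · intro i j h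
    exact Fin.ext (nodeAt_inj hnod (by omega) (by omega) h)
  · exact nodeAt_zero w
  · show w.nodeAt (Fin.last (k+1)).val = Y
    rw [Fin.val_last, ← hk]
    exact nodeAt_len w
  · intro i
    have := edgeAt w i.val (by omega)
    simpa [Fin.coe_castSucc, Fin.val_succ] using this
  · rw [not_sigmaBlocked_iff]
    intro j
    have hjk : (j : ℕ) < k := j.isLt
    have := openFrom_triples w none ho j.val (by omega)
    simpa [Fin.coe_castSucc, Fin.val_succ] using this

lemma path_triple {G : DiGraph V} {S : Set V} {X Y : V} (p : GPath G X Y)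
    (h : ∀ j : Fin p.k,
      Ok G S (p.dir j.castSucc) (p.node j.castSucc.castSucc) (p.node j.succ.castSucc)
        (p.dir j.succ) (p.node j.succ.succ))
    (i : ℕ) (h1 : i + 1 < p.k + 1) :
    Ok G S (p.dir ⟨i, by omega⟩) (p.node ⟨i, by omega⟩) (p.node ⟨i+1, by omega⟩)
      (p.dir ⟨i+1, by omega⟩) (p.node ⟨i+2, by omega⟩) := by
  have hok := h ⟨i, by omega⟩
  have e1 : ((⟨i, by omega⟩ : Fin p.k).castSucc : Fin (p.k+1)) = ⟨i, by omega⟩ :=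
    by apply Fin.ext; simp
  have e2 : ((⟨i, by omega⟩ : Fin p.k).succ : Fin (p.k+1)) = ⟨i+1, by omega⟩ :=
    by apply Fin.ext; simp
  have e3 : ((⟨i, by omega⟩ : Fin (p.k+1)).castSucc : Fin (p.k+2)) = ⟨i, by omega⟩ :=
    by apply Fin.ext; simp
  have e4 : ((⟨i+1, by omega⟩ : Fin (p.k+1)).castSucc : Fin (p.k+2)) = ⟨i+1, by omega⟩ :=
    by apply Fin.ext; simp
  have e5 : ((⟨i+1, by omega⟩ : Fin (p.k+1)).succ : Fin (p.k+2)) = ⟨i+2, by omega⟩ :=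
    by apply Fin.ext; simp
  simp only [e1, e2, e3, e4, e5] at hok
  exact hok

lemma exists_open_walk_of_path {G : DiGraph V} {S : Set V} {X Y : V}
    (p : GPath G X Y) (h : ¬ p.sigmaBlocked S) :
    ∃ w : Walk G X Y, openFrom S none w := by
  rw [not_sigmaBlocked_iff] at h
  have key : ∀ (m i : ℕ) (hi : i + m = p.k + 1),
      ∃ w : Walk G (p.node ⟨i, by omega⟩) (p.node (Fin.last (p.k+1))),
        openFrom S none w ∧
        (∀ (h0 : 0 < i), openFrom S
          (some (p.dir ⟨i-1, by omega⟩, p.node ⟨i-1, by omega⟩)) w) := by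
    intro m
    induction m with
    | zero =>
        intro i hi
        have hieq : (⟨i, by omega⟩ : Fin (p.k+2)) = Fin.last (p.k+1) := by
          apply Fin.ext; simp [Fin.val_last]; omega
        rw [hieq]
        exact ⟨.nil, trivial, fun _ => trivial⟩
    | succ m ih =>
        intro i hi
        obtain ⟨w', hw1, hw2⟩ := ih (i+1) (by omega)
        have hik : i < p.k + 1 := by omega
        have hcast : ((⟨i, hik⟩ : Fin (p.k+1)).castSucc : Fin (p.k+2)) = ⟨i, by omega⟩ := by
          apply Fin.ext; simp
        have hsucc : ((⟨i, hik⟩ : Fin (p.k+1)).succ : Fin (p.k+2)) = ⟨i+1, by omega⟩ := by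
          apply Fin.ext; simp
        have hadj := p.adj ⟨i, hik⟩
        rw [hcast, hsucc] at hadj
        have hw2' : openFrom S (some (p.dir ⟨i, hik⟩, p.node ⟨i, by omega⟩)) w' :=
          hw2 (by omega)
        refine ⟨.cons (p.dir ⟨i, hik⟩) hadj.1 hadj.2 w', ⟨by simp, hw2'⟩, ?_⟩
        intro h0
        refine ⟨?_, hw2'⟩
        intro q hq
        replace hq := Option.some_inj.mp hq
        subst hq
        have hok := path_triple p h (i-1) (by omega)
        have e1 : (⟨i-1+1, by omega⟩ : Fin (p.k+1)) = ⟨i, hik⟩ := by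
          apply Fin.ext; simp; omega
        have e2 : (⟨i-1+1, by omega⟩ : Fin (p.k+2)) = (⟨i, by omega⟩ : Fin (p.k+2)) := by
          apply Fin.ext; simp; omega
        have e3 : (⟨i-1+2, by omega⟩ : Fin (p.k+2)) = (⟨i+1, by omega⟩ : Fin (p.k+2)) := by
          apply Fin.ext; simp; omega
        simp only [e1, e2, e3] at hok
        exact hok
  obtain ⟨w, hw, -⟩ := key (p.k+1) 0 (by omega)
  have h0 : p.node ⟨0, by omega⟩ = X := p.first
  have hl : p.node (Fin.last (p.k+1)) = Y := p.last
  exact ⟨Walk.castW h0 hl w, Walk.openFrom_castW h0 hl w hw⟩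

end MBProof
namespace MBProof

open DiGraph Walk

variable {V : Type}

namespace Walk

variable {G : DiGraph V}

lemma lastInc_append : ∀ {x y z : V} (inc) (w1 : Walk G x y) (w2 : Walk G y z),
    lastInc inc (w1.append w2) = lastInc (lastInc inc w1) w2
  | _, _, _, inc, .nil, w2 => rfl
  | _, _, _, inc, .cons d hT hF w, w2 => lastInc_append _ w w2

end Walk

section Acy

variable {G Ga : DiGraph V}

lemma acy_edge_reach (hGa : IsAcyclification G Ga) {x y : V} (h : Ga.Edge x y) :
    G.reach x y := by
  by_cases hs : x ∈ G.scc y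
  · exact hs.2
  · have hne : x ≠ y := by rintro rfl; exact hs (scc_self G _)
    obtain ⟨W, hW, hWe⟩ := (hGa.2.1 x y hne hs).mp h
    exact (Relation.ReflTransGen.single hWe).trans hW.2

lemma acy_reach (hGa : IsAcyclification G Ga) {x y : V} (h : Ga.reach x y) :
    G.reach x y := by
  induction h with
  | refl => exact Relation.ReflTransGen.refl
  | tail hxy h2 ih => exact ih.trans (acy_edge_reach hGa h2)

lemma acy_anc (hGa : IsAcyclification G Ga) {S : Set V} {x : V} (h : x ∈ Ga.anc S) :
    x ∈ G.anc S := by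
  obtain ⟨s, hs, hr⟩ := h
  exact ⟨s, hs, acy_reach hGa hr⟩

lemma acy_scc_triv (hGa : IsAcyclification G Ga) {x y : V} (h : y ∈ Ga.scc x) : y = x :=
  scc_acyclic hGa.1 h

lemma acy_edge_ne (Ga : DiGraph V) {x y : V} (h : Ga.Edge x y) : x ≠ y := by
  rintro rfl; exact Ga.loopless x h

lemma acy_retarget (hGa : IsAcyclification G Ga) {u w0 c : V}
    (he : G.Edge u w0) (hw0 : w0 ∈ G.scc c) (hu : u ∉ G.scc c) : Ga.Edge u c := by
  have hne : u ≠ c := by rintro rfl; exact hu (scc_self G _)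
  exact (hGa.2.1 u c hne hu).mpr ⟨w0, hw0, he⟩

lemma acy_tournament (hGa : IsAcyclification G Ga) {x y : V}
    (h : x ∈ G.scc y) (hne : x ≠ y) : Ga.Edge x y ∨ Ga.Edge y x := by
  rcases (hGa.2.2 x y hne h) with ⟨h1, _⟩ | ⟨h1, _⟩
  · exact Or.inl h1
  · exact Or.inr h1

/-- Lemma A: every `G`-ancestor of `S` has, in its `G`-scc, a `Ga`-ancestor of `S`. -/
lemma lemA (hGa : IsAcyclification G Ga) {S : Set V} {x : V} (h : x ∈ G.anc S) :
    ∃ c ∈ G.scc x, c ∈ Ga.anc S := by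
  obtain ⟨s, hs, hr⟩ := h
  induction hr using Relation.ReflTransGen.head_induction_on with
  | refl => exact ⟨s, scc_self G s, mem_anc_of_mem hs⟩
  | @head z z' h' h'' ih =>
      obtain ⟨c, hc, hcanc⟩ := ih
      by_cases hzz : z' ∈ G.scc z
      · exact ⟨c, (scc_eq_of_mem hzz) ▸ hc, hcanc⟩
      · have hz'c : z' ∈ G.scc c := scc_symm hc
        have hzc : z ∉ G.scc c := by
          intro hmem
          exact hzz (by rw [← scc_eq_of_mem hmem]; exact hz'c)
        have : Ga.Edge z c := acy_retarget hGa h' hz'c hzc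
        exact ⟨z, scc_self G z, anc_of_edge this hcanc⟩

lemma acy_edge_decomp (hGa : IsAcyclification G Ga) {a b : V} (h : Ga.Edge a b) :
    ∃ W, G.Edge a W ∧ W ∈ G.scc b := by
  by_cases hs : a ∈ G.scc b
  · have hr : G.reach a b := hs.2
    have hne : a ≠ b := acy_edge_ne Ga h
    rcases Relation.reflTransGen_iff_eq_or_transGen.mp hr with h' | h'
    · exact absurd h'.symm hne
    · obtain ⟨W, hW1, hW2⟩ := Relation.TransGen.head'_iff.mp h'
      refine ⟨W, hW1, ⟨hs.1.trans (Relation.ReflTransGen.single hW1), hW2⟩⟩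
  · obtain ⟨W, hW, hWe⟩ := (hGa.2.1 a b (acy_edge_ne Ga h) hs).mp h
    exact ⟨W, hWe, hW⟩

end Acy

end MBProof
namespace MBProof

open DiGraph Walk

variable {V : Type}

section Chains

variable {G Ga : DiGraph V}

/-- A directed walk within an scc, traversed forwards. -/
lemma dirWalk (S : Set V) {W b : V} (h1 : G.reach W b) (h2 : G.reach b W) :
    ∃ cw : Walk G W b, (∀ u, openFrom S (some (true, u)) cw) ∧
      (∀ u, ∃ u', lastInc (some (true, u)) cw = some (true, u')) := by
  induction h1 using Relation.ReflTransGen.head_induction_on with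
  | refl => exact ⟨.nil, fun u => trivial, fun u => ⟨u, rfl⟩⟩
  | @head c d h' h'' ih =>
      have hbd : G.reach b d := h2.trans (Relation.ReflTransGen.single h')
      obtain ⟨cw, hopen, hlast⟩ := ih hbd
      refine ⟨.cons true (fun _ => h') (fun h => Bool.noConfusion h) cw,
        fun u => ⟨?_, hopen c⟩, fun u => hlast c⟩
      intro q hq
      cases hq
      rw [Ok, if_neg (by simp)]
      right
      exact ⟨fun _ => ⟨Relation.ReflTransGen.single h', h''.trans h2⟩,
        fun h => Bool.noConfusion h⟩

/-- A directed walk within an scc, traversed backwards. -/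
lemma revDirWalk (S : Set V) {a c : V} (h1 : G.reach c a) (h2 : G.reach a c) :
    ∃ cw : Walk G a c,
      (∀ inc, (∀ q : Bool × V, inc = some q →
          (q.1 = true → a ∈ G.anc S) ∧ (q.1 = false → a ∉ S)) →
        openFrom S inc cw) ∧
      ((∀ inc : Option (Bool × V), lastInc inc cw = inc) ∧ a = c ∨
        (∃ u' ∈ G.scc a, ∀ inc : Option (Bool × V), lastInc inc cw = some (false, u'))) := by
  induction h1 using Relation.ReflTransGen.head_induction_on with
  | refl => exact ⟨.nil, fun inc _ => trivial, Or.inl ⟨fun inc => rfl, rfl⟩⟩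
  | @head c' d h' h'' ih =>
      have had : G.reach a d := h2.trans (Relation.ReflTransGen.single h')
      obtain ⟨cw, hopen, hlast⟩ := ih had
      have hd_scc : d ∈ G.scc a := ⟨had, h''⟩
      refine ⟨cw.append (.cons false (fun h => Bool.noConfusion h) (fun _ => h') .nil), ?_, ?_⟩
      · intro inc hyp
        rw [openFrom_append]
        refine ⟨hopen inc hyp, ?_, trivial⟩
        intro q hq
        rcases hlast with ⟨hl, heq⟩ | ⟨u', hu', hl⟩
        · subst heq
          rw [hl inc] at hq
          have := hyp q hq
          rcases hb : q.1 with _ | _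
          · rw [Ok, if_neg (by simp [hb])]
            left; exact this.2 hb
          · rw [Ok, if_pos (by simp [hb])]
            exact this.1 hb
        · rw [hl inc] at hq
          cases hq
          rw [Ok, if_neg (by simp)]
          right
          refine ⟨fun h => Bool.noConfusion h, fun _ => ?_⟩
          rw [← scc_eq_of_mem hd_scc]
          exact hu'
      · right
        refine ⟨d, hd_scc, fun inc => ?_⟩
        rw [lastInc_append]
        rfl

lemma chainT (S : Set V) (hGa : IsAcyclification G Ga) {a b : V} (h : Ga.Edge a b) :
    ∃ cw : Walk G a b,
      (∀ inc, (∀ q : Bool × V, inc = some q → a ∉ S) → openFrom S inc cw) ∧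
      (∃ u', ∀ inc : Option (Bool × V), lastInc inc cw = some (true, u')) := by
  obtain ⟨W, hW, hWscc⟩ := acy_edge_decomp hGa h
  obtain ⟨cw, hopen, hlast⟩ := dirWalk S hWscc.2 hWscc.1
  obtain ⟨u', hu'⟩ := hlast a
  refine ⟨.cons true (fun _ => hW) (fun h => Bool.noConfusion h) cw, ?_, ⟨u', fun inc => hu'⟩⟩
  intro inc hyp
  refine ⟨?_, hopen a⟩
  intro q hq
  rw [Ok, if_neg (by simp)]
  left
  exact hyp q hq

lemma chainF (S : Set V) (hGa : IsAcyclification G Ga) {a b : V} (h : Ga.Edge b a) :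
    ∃ cw : Walk G a b,
      (∀ inc, (∀ q : Bool × V, inc = some q →
          (q.1 = true → a ∈ G.anc S) ∧ (q.1 = false → a ∉ S)) →
        openFrom S inc cw) ∧
      (∃ u', ∀ inc : Option (Bool × V), lastInc inc cw = some (false, u')) := by
  obtain ⟨W, hW, hWscc⟩ := acy_edge_decomp hGa h
  obtain ⟨cw, hopen, hlast⟩ := revDirWalk S hWscc.2 hWscc.1
  refine ⟨cw.append (.cons false (fun h' => Bool.noConfusion h') (fun _ => hW) .nil), ?_, ?_⟩
  · intro inc hyp
    rw [openFrom_append]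
    refine ⟨hopen inc hyp, ?_, trivial⟩
    intro q hq
    rcases hlast with ⟨hl, heq⟩ | ⟨u', hu', hl⟩
    · subst heq
      rw [hl inc] at hq
      have := hyp q hq
      rcases hb : q.1 with _ | _
      · rw [Ok, if_neg (by simp [hb])]
        left; exact this.2 hb
      · rw [Ok, if_pos (by simp [hb])]
        exact this.1 hb
    · rw [hl inc] at hq
      cases hq
      rw [Ok, if_neg (by simp)]
      right
      refine ⟨fun h' => Bool.noConfusion h', fun _ => ?_⟩
      rw [← scc_eq_of_mem hWscc]
      exact hu'
  · refine ⟨W, fun inc => ?_⟩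
    rw [lastInc_append]
    rfl

/-- Transfer: a σ-open walk in the acyclification yields a σ-open walk in `G`. -/
lemma toG (S : Set V) (hGa : IsAcyclification G Ga) :
    ∀ {a Y : V} (w : Walk Ga a Y) (inc), openFrom S inc w →
    (∀ q : Bool × V, inc = some q →
      (q.1 = true → Ga.Edge q.2 a) ∧ (q.1 = false → Ga.Edge a q.2)) →
    ∃ w' : Walk G a Y, ∀ inc',
      Option.map Prod.fst inc' = Option.map Prod.fst inc → openFrom S inc' w' := by
  intro a Y w
  induction w with
  | nil => exact fun inc _ _ => ⟨.nil, fun _ _ => trivial⟩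
  | @cons a y₁ Y d₁ hT hF w₂ ih =>
    intro inc ho hwf
    have hwf₂ : ∀ q : Bool × V, some (d₁, a) = some q →
        (q.1 = true → Ga.Edge q.2 y₁) ∧ (q.1 = false → Ga.Edge y₁ q.2) := by
      rintro q hq
      cases hq
      exact ⟨fun h => hT h, fun h => hF h⟩
    obtain ⟨w₂', hw₂'⟩ := ih (some (d₁, a)) ho.2 hwf₂
    cases d₁ with
    | true =>
      have hedge : Ga.Edge a y₁ := hT rfl
      obtain ⟨cw, hopen, u', hlast⟩ := chainT S hGa hedge
      refine ⟨cw.append w₂', ?_⟩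
      intro inc' hmatch
      rw [openFrom_append]
      constructor
      · apply hopen
        intro q hq
        -- a ∉ S from the Ga-triple at a
        subst hq
        simp only [Option.map_some] at hmatch
        -- inc must be some with same direction
        match inc, hmatch with
        | some q₀, hmatch =>
          have hq₀ : Ok Ga S q₀.1 q₀.2 a true y₁ := ho.1 q₀ rfl
          rw [Ok, if_neg (by simp)] at hq₀
          rcases hq₀ with h' | h'
          · exact h'
          · exfalso
            have h1 := h'.1 rfl
            have h2 := acy_scc_triv hGa h1
            rw [h2] at hedge
            exact Ga.loopless a hedge
      · rw [hlast inc']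
        exact hw₂' _ rfl
    | false =>
      have hedge : Ga.Edge y₁ a := hF rfl
      obtain ⟨cw, hopen, u', hlast⟩ := chainF S hGa hedge
      refine ⟨cw.append w₂', ?_⟩
      intro inc' hmatch
      rw [openFrom_append]
      constructor
      · apply hopen
        intro q hq
        subst hq
        simp only [Option.map_some] at hmatch
        match inc, hmatch, hwf, ho with
        | some q₀, hmatch, hwf, ho =>
          have hq₀ : Ok Ga S q₀.1 q₀.2 a false y₁ := ho.1 q₀ rfl
          have hfst : q.1 = q₀.1 := by
            simpa using hmatch
          constructor
          · intro hq1
            rw [Ok, if_pos (by simp [← hfst, hq1])] at hq₀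
            exact acy_anc hGa hq₀
          · intro hq1
            rw [Ok, if_neg (by simp [← hfst, hq1])] at hq₀
            rcases hq₀ with h' | h'
            · exact h'
            · exfalso
              have h2 := h'.2 (by rw [← hfst]; exact hq1)
              have h3 := acy_scc_triv hGa h2
              have h4 := (hwf q₀ rfl).2 (hfst ▸ hq1)
              rw [h3] at h4
              exact Ga.loopless a h4
      · rw [hlast inc']
        exact hw₂' _ rfl

end Chains

end MBProof
namespace MBProof

open DiGraph Walk

variable {V : Type}

section ToGa

variable {G Ga : DiGraph V}

/-- Transfer: a σ-open walk in `G` yields a σ-open walk in the acyclification.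
The conclusion is a conjunction of three statements corresponding to the three
possible states of the segment-scanning construction. -/
lemma toGa (S : Set V) (hGa : IsAcyclification G Ga) {Y : V} :
    ∀ {a : V} (w : Walk G a Y) (inc : Option (Bool × V)), openFrom S inc w →
    ((∀ x0, x0 ∈ G.scc a → (inc = none → x0 = a) →
        ∃ ρ : Walk Ga x0 Y, openFrom S none ρ) ∧
     (∀ x0 P, x0 ∈ G.scc a → x0 ∉ S → (∃ q : Bool × V, inc = some q) →
        ∃ ρ : Walk Ga x0 Y, openFrom S (some (false, P)) ρ) ∧
     (∀ u w0, w0 ∈ G.scc a → G.Edge u w0 → u ∉ G.scc a → (∃ q : Bool × V, inc = some q) →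
        ((∃ c ∈ G.scc a, c ∈ Ga.anc S) ∨ (∃ p : V, inc = some (true, p))) →
        ∃ c, Ga.Edge u c ∧ ∃ ρ : Walk Ga c Y, openFrom S (some (true, u)) ρ)) := by
  intro a w
  induction w with
  | @nil a =>
    intro inc ho
    refine ⟨?_, ?_, ?_⟩
    · intro x0 hx0 _
      by_cases hxa : x0 = a
      · subst hxa; exact ⟨.nil, trivial⟩
      · rcases acy_tournament hGa hx0 hxa with e | e
        · exact ⟨.cons true (fun _ => e) (fun h => Bool.noConfusion h) .nil,
            fun q (hq : (none : Option (Bool × V)) = some q) => (Option.some_ne_none q hq.symm).elim, trivial⟩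
        · exact ⟨.cons false (fun h => Bool.noConfusion h) (fun _ => e) .nil,
            fun q (hq : (none : Option (Bool × V)) = some q) => (Option.some_ne_none q hq.symm).elim, trivial⟩
    · intro x0 P hx0 hx0S _
      by_cases hxa : x0 = a
      · subst hxa; exact ⟨.nil, trivial⟩
      · rcases acy_tournament hGa hx0 hxa with e | e
        · refine ⟨.cons true (fun _ => e) (fun h => Bool.noConfusion h) .nil, ?_, trivial⟩
          intro q hq; cases hq
          rw [Ok, if_neg (by simp)]; left; exact hx0S
        · refine ⟨.cons false (fun h => Bool.noConfusion h) (fun _ => e) .nil, ?_, trivial⟩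
          intro q hq; cases hq
          rw [Ok, if_neg (by simp)]; left; exact hx0S
    · intro u w0 hw0 hE hu _ _
      exact ⟨a, acy_retarget hGa hE hw0 hu, .nil, trivial⟩
  | @cons a b Y d hT hF w' ih =>
    intro inc ho
    obtain ⟨hhead, ho'⟩ := ho
    by_cases hbscc : b ∈ G.scc a
    · -- move within the current strongly connected component
      have hsEq : G.scc a = G.scc b := scc_eq_of_mem hbscc
      obtain ⟨ihA, ihB, ihC⟩ := ih (some (d, a)) ho'
      refine ⟨?_, ?_, ?_⟩
      · intro x0 hx0 _
        exact ihA x0 (hsEq ▸ hx0) (fun h => by cases h)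
      · intro x0 P hx0 hx0S _
        exact ihB x0 P (hsEq ▸ hx0) hx0S ⟨(d, a), rfl⟩
      · intro u w0 hw0 hE hu hsome hinv
        refine ihC u w0 (hsEq ▸ hw0) hE (fun h => hu (hsEq ▸ h)) ⟨(d, a), rfl⟩ ?_
        rcases hinv with ⟨c, hc, hcanc⟩ | ⟨p, hp⟩
        · exact Or.inl ⟨c, hsEq ▸ hc, hcanc⟩
        · cases d with
          | true => exact Or.inr ⟨a, rfl⟩
          | false =>
            -- a is a collider of the original walk, hence a G-ancestor of S
            have hOk : Ok G S true p a false b := by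
              have := hhead (true, p) hp
              exact this
            rw [Ok, if_pos (by simp)] at hOk
            obtain ⟨c, hc, hcanc⟩ := lemA hGa hOk
            exact Or.inl ⟨c, hsEq ▸ hc, hcanc⟩
    · -- cross edge: the segment ends at `a`
      have hanotb : a ∉ G.scc b := fun h => hbscc (scc_symm h)
      cases d with
      | true =>
        have hedge : G.Edge a b := hT rfl
        -- openness of the next segment, entered with an arrow into it
        obtain ⟨c, hac, ρ, hρ⟩ :=
          (ih (some (true, a)) ho').2.2 a b (scc_self G b) hedge hanotb
            ⟨(true, a), rfl⟩ (Or.inr ⟨a, rfl⟩)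
        have haS : (∃ q : Bool × V, inc = some q) → a ∉ S := by
          rintro ⟨q, hq⟩
          have hOk := hhead q hq
          rw [Ok, if_neg (by simp)] at hOk
          rcases hOk with h' | h'
          · exact h'
          · exact absurd (h'.1 rfl) hbscc
        refine ⟨?_, ?_, ?_⟩
        · intro x0 hx0 hnone
          by_cases hxa : x0 = a
          · subst hxa
            exact ⟨.cons true (fun _ => hac) (fun h => Bool.noConfusion h) ρ,
              fun q (hq : (none : Option (Bool × V)) = some q) => (Option.some_ne_none q hq.symm).elim, hρ⟩
          · have hsome : ∃ q : Bool × V, inc = some q := by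
              cases inc with
              | none => exact absurd (hnone rfl) hxa
              | some q => exact ⟨q, rfl⟩
            have haS' := haS hsome
            rcases acy_tournament hGa hx0 hxa with e | e
            · refine ⟨.cons true (fun _ => e) (fun h => Bool.noConfusion h)
                (.cons true (fun _ => hac) (fun h => Bool.noConfusion h) ρ),
                fun q (hq : (none : Option (Bool × V)) = some q) => (Option.some_ne_none q hq.symm).elim, ?_, hρ⟩
              intro q hq; cases hq
              rw [Ok, if_neg (by simp)]; left; exact haS'
            · refine ⟨.cons false (fun h => Bool.noConfusion h) (fun _ => e)
                (.cons true (fun _ => hac) (fun h => Bool.noConfusion h) ρ),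
                fun q (hq : (none : Option (Bool × V)) = some q) => (Option.some_ne_none q hq.symm).elim, ?_, hρ⟩
              intro q hq; cases hq
              rw [Ok, if_neg (by simp)]; left; exact haS'
        · intro x0 P hx0 hx0S hsome
          have haS' := haS hsome
          by_cases hxa : x0 = a
          · subst hxa
            refine ⟨.cons true (fun _ => hac) (fun h => Bool.noConfusion h) ρ, ?_, hρ⟩
            intro q hq; cases hq
            rw [Ok, if_neg (by simp)]; left; exact hx0S
          · rcases acy_tournament hGa hx0 hxa with e | e
            · refine ⟨.cons true (fun _ => e) (fun h => Bool.noConfusion h)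
                (.cons true (fun _ => hac) (fun h => Bool.noConfusion h) ρ), ?_, ?_, hρ⟩
              · intro q hq; cases hq
                rw [Ok, if_neg (by simp)]; left; exact hx0S
              · intro q hq; cases hq
                rw [Ok, if_neg (by simp)]; left; exact haS'
            · refine ⟨.cons false (fun h => Bool.noConfusion h) (fun _ => e)
                (.cons true (fun _ => hac) (fun h => Bool.noConfusion h) ρ), ?_, ?_, hρ⟩
              · intro q hq; cases hq
                rw [Ok, if_neg (by simp)]; left; exact hx0S
              · intro q hq; cases hq
                rw [Ok, if_neg (by simp)]; left; exact haS'
        · intro u w0 hw0 hE hu hsome hinv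
          have haS' := haS hsome
          refine ⟨a, acy_retarget hGa hE hw0 hu,
            .cons true (fun _ => hac) (fun h => Bool.noConfusion h) ρ, ?_, hρ⟩
          intro q hq; cases hq
          rw [Ok, if_neg (by simp)]; left; exact haS'
      | false =>
        have hedge : G.Edge b a := hF rfl
        have hret : ∀ c', c' ∈ G.scc a → Ga.Edge b c' := by
          intro c' hc'
          refine acy_retarget hGa hedge (scc_symm hc') ?_
          intro h
          exact hbscc (by rw [scc_eq_of_mem hc']; exact h)
        -- the collider node for the SIn case
        have hgetc : ((∃ c ∈ G.scc a, c ∈ Ga.anc S) ∨ (∃ p : V, inc = some (true, p))) →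
            ∃ c ∈ G.scc a, c ∈ Ga.anc S := by
          rintro (h | ⟨p, hp⟩)
          · exact h
          · have hOk : Ok G S true p a false b := hhead (true, p) hp
            rw [Ok, if_pos (by simp)] at hOk
            exact lemA hGa hOk
        cases w' with
        | nil =>
          refine ⟨?_, ?_, ?_⟩
          · intro x0 hx0 _
            exact ⟨.cons false (fun h => Bool.noConfusion h) (fun _ => hret x0 hx0) .nil,
              fun q (hq : (none : Option (Bool × V)) = some q) => (Option.some_ne_none q hq.symm).elim, trivial⟩
          · intro x0 P hx0 hx0S _
            refine ⟨.cons false (fun h => Bool.noConfusion h) (fun _ => hret x0 hx0) .nil,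
              ?_, trivial⟩
            intro q hq; cases hq
            rw [Ok, if_neg (by simp)]; left; exact hx0S
          · intro u w0 hw0 hE hu hsome hinv
            obtain ⟨c', hc', hcanc⟩ := hgetc hinv
            refine ⟨c', acy_retarget hGa hE (by rw [← scc_eq_of_mem hc']; exact hw0)
              (fun h => hu (by rw [scc_eq_of_mem hc']; exact h)),
              .cons false (fun h => Bool.noConfusion h) (fun _ => hret c' hc') .nil,
              ?_, trivial⟩
            intro q hq; cases hq
            rw [Ok, if_pos (by simp)]
            exact hcanc
        | cons d₂ hT₂ hF₂ w₂ =>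
          have hbS : b ∉ S := by
            have hOk := ho'.1 (false, a) rfl
            rw [Ok, if_neg (by simp)] at hOk
            rcases hOk with h' | h'
            · exact h'
            · exact absurd (scc_symm (h'.2 rfl)) hbscc
          have ihB := (ih (some (false, a)) ho').2.1
          refine ⟨?_, ?_, ?_⟩
          · intro x0 hx0 _
            obtain ⟨ρ, hρ⟩ := ihB b x0 (scc_self G b) hbS ⟨(false, a), rfl⟩
            exact ⟨.cons false (fun h => Bool.noConfusion h) (fun _ => hret x0 hx0) ρ,
              fun q (hq : (none : Option (Bool × V)) = some q) => (Option.some_ne_none q hq.symm).elim, hρ⟩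
          · intro x0 P hx0 hx0S _
            obtain ⟨ρ, hρ⟩ := ihB b x0 (scc_self G b) hbS ⟨(false, a), rfl⟩
            refine ⟨.cons false (fun h => Bool.noConfusion h) (fun _ => hret x0 hx0) ρ,
              ?_, hρ⟩
            intro q hq; cases hq
            rw [Ok, if_neg (by simp)]; left; exact hx0S
          · intro u w0 hw0 hE hu hsome hinv
            obtain ⟨c', hc', hcanc⟩ := hgetc hinv
            obtain ⟨ρ, hρ⟩ := ihB b c' (scc_self G b) hbS ⟨(false, a), rfl⟩
            refine ⟨c', acy_retarget hGa hE (by rw [← scc_eq_of_mem hc']; exact hw0)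
              (fun h => hu (by rw [scc_eq_of_mem hc']; exact h)),
              .cons false (fun h => Bool.noConfusion h) (fun _ => hret c' hc') ρ,
              ?_, hρ⟩
            intro q hq; cases hq
            rw [Ok, if_pos (by simp)]
            exact hcanc

end ToGa

end MBProof
namespace MBProof

open DiGraph Walk

variable {V : Type}

lemma dBlocked_iff_sigmaBlocked {Ga : DiGraph V} (hacy : Ga.Acyclic) {X Y : V}
    (p : GPath Ga X Y) (S : Set V) : p.dBlocked S ↔ p.sigmaBlocked S := by
  rw [GPath.dBlocked, GPath.sigmaBlocked]
  refine exists_congr (fun j => ?_)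
  constructor
  · rintro (h | ⟨hnc, hS⟩)
    · exact Or.inl h
    · refine Or.inr ⟨hnc, hS, ?_⟩
      rcases hd' : p.dir j.succ with _ | _
      · have hd : p.dir j.castSucc = false := by
          by_contra h
          exact hnc ⟨by simpa using h, hd'⟩
        refine Or.inr ⟨hd, ?_⟩
        intro hmem
        have heq := scc_acyclic hacy hmem
        have := p.inj heq
        have h1 : (j.castSucc.castSucc : Fin (p.k+2)).val = j.val := by simp
        have h2 : ((j.succ.castSucc : Fin (p.k+2))).val = j.val + 1 := by simp
        rw [this] at h1
        omega
      · refine Or.inl ⟨rfl, ?_⟩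
        intro hmem
        have heq := scc_acyclic hacy hmem
        have := p.inj heq
        have h1 : (j.succ.succ : Fin (p.k+2)).val = j.val + 2 := by simp
        have h2 : ((j.succ.castSucc : Fin (p.k+2))).val = j.val + 1 := by simp
        rw [this] at h1
        omega
  · rintro (h | ⟨hnc, hS, _⟩)
    · exact Or.inl h
    · exact Or.inr ⟨hnc, hS⟩

lemma dSep_iff_sigmaSep {Ga : DiGraph V} (hacy : Ga.Acyclic) (X W : V) (S : Set V) :
    Ga.dSep X W S ↔ Ga.sigmaSep X W S :=
  forall_congr' (fun p => dBlocked_iff_sigmaBlocked hacy p S)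

lemma sigmaSep_iff_no_open_walk {G : DiGraph V} {X W : V} (hne : X ≠ W) (S : Set V) :
    G.sigmaSep X W S ↔ ¬ ∃ w : Walk G X W, openFrom S none w := by
  constructor
  · rintro hsep ⟨w, hw⟩
    obtain ⟨w', hw', hnod⟩ := exists_nodup_open S w.len w le_rfl hw
    obtain ⟨p, hp⟩ := exists_open_path_of_walk hne w' hw' hnod
    exact hp (hsep p)
  · intro hno p
    by_contra hp
    exact hno (exists_open_walk_of_path p hp)

/-- The key equivalence: σ-separation in `G` coincides with d-separation in
any σ-acyclification of `G`. -/
lemma key {G Ga : DiGraph V} (hGa : IsAcyclification G Ga) {X W : V} (hne : X ≠ W)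
    (S : Set V) : G.sigmaSep X W S ↔ Ga.dSep X W S := by
  rw [dSep_iff_sigmaSep hGa.1, sigmaSep_iff_no_open_walk hne,
    sigmaSep_iff_no_open_walk hne]
  constructor
  · rintro hno ⟨w, hw⟩
    obtain ⟨w', hw'⟩ := toG S hGa w none hw (fun q hq => by cases hq)
    exact hno ⟨w', hw' none rfl⟩
  · rintro hno ⟨w, hw⟩
    obtain ⟨ρ, hρ⟩ := (toGa S hGa w none hw).1 X (scc_self G X) (fun _ => rfl)
    exact hno ⟨ρ, hρ⟩

end MBProof

/-- The observed Markov blanket is determined by the observed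
separation relations: the collection of separating sets for `X` w.r.t.
σ-separation in `G` coincides with that w.r.t. d-separation in any
σ-acyclification; consequently the minimal such set is `MB_σ^G(X)`. -/
theorem mb_determined_by_observed_separations {V : Type} [Fintype V]
    (G Ga : DiGraph V) (Obs Lat : Set V)
    (hpart : Obs ∪ Lat = Set.univ) (hdisj : Obs ∩ Lat = ∅)
    (hGa : IsAcyclification G Ga) (X : V) (hX : X ∈ Obs) :
    (∀ S ⊆ Obs \ {X},
      ((∀ W ∈ Obs \ (S ∪ {X}), G.sigmaSep X W S) ↔
        (∀ W ∈ Obs \ (S ∪ {X}), Ga.dSep X W S))) ∧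
    (∀ S : Set V, Ga.IsDMB Obs X S ↔ G.IsSigmaMB Obs X S) := by
  have hne : ∀ {W : V} {T : Set V}, W ∈ Obs \ (T ∪ {X}) → X ≠ W := by
    intro W T hW he
    exact hW.2 (Set.mem_union_right _ (Set.mem_singleton_iff.mpr he.symm))
  have hkey : ∀ {W : V} (S : Set V), X ≠ W → (G.sigmaSep X W S ↔ Ga.dSep X W S) :=
    fun {W} S h => MBProof.key hGa h S
  constructor
  · intro S _
    constructor
    · intro h W hW
      exact (hkey S (hne hW)).mp (h W hW)
    · intro h W hW
      exact (hkey S (hne hW)).mpr (h W hW)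
  · intro S
    constructor
    · rintro ⟨h1, h2, h3⟩
      refine ⟨h1, ?_, ?_⟩
      · intro W hW
        exact (hkey S (hne hW)).mpr (h2 W hW)
      · intro T hT hSep
        apply h3 T hT
        intro W hW
        exact (hkey T (hne hW)).mp (hSep W hW)
    · rintro ⟨h1, h2, h3⟩
      refine ⟨h1, ?_, ?_⟩
      · intro W hW
        exact (hkey S (hne hW)).mp (h2 W hW)
      · intro T hT hSep
        apply h3 T hT
        intro W hW
        exact (hkey T (hne hW)).mpr (hSep W hW)
end
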